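/- For every comparison matrix P for N = 2^n players, every draw σ, every player i*, and every ε > 0, the infimum wp_ε(i*,P,σ) = inf_{P' ∈ 𝒫(P,ε)} wp(i*,P',σ) is attained: there exists P' ∈ 𝒫(P,ε) with wp(i*,P',σ) = wp_ε(i*,P,σ) such that, in addition, for every pair i ≠ j either |P'_ij − P_ij| = ε or P'_ij ∈ {0,1}. -/

import Mathlib

/-- A perfect (balanced) binary tree of depth `n` with leaves labelled by `α`. -/
inductive BT (α : Type) : ℕ → Type
  | leaf : α → BT α 0
  | node {n : ℕ} : BT α n → BT α n → BT α (n + 1)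

namespace BT

/-- The list of leaf labels, from left to right. -/
def leaves {α : Type} : ∀ {n : ℕ}, BT α n → List α
  | _, .leaf a => [a]
  | _, .node L R => L.leaves ++ R.leaves

/-- Relabel the leaves of a tree. -/
def map {α β : Type} (f : α → β) : ∀ {n : ℕ}, BT α n → BT β n
  | _, .leaf a => .leaf (f a)
  | _, .node L R => .node (L.map f) (R.map f)

end BT

/-- Two trees represent the same draw iff one can be obtained from the other by
swapping the two children subtrees at internal nodes. -/
def BTequiv {α : Type} : ∀ {n : ℕ}, BT α n → BT α n → Prop
  | 0, .leaf a, .leaf b => a = b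
  | _ + 1, .node L R, .node L' R' =>
      (BTequiv L L' ∧ BTequiv R R') ∨ (BTequiv L R' ∧ BTequiv R L')

/-- A draw: each of the `N` players occurs exactly once among the leaves. -/
def IsDraw {N n : ℕ} (t : BT (Fin N) n) : Prop :=
  ∀ i : Fin N, t.leaves.count i = 1

/-- The winning distribution of a knockout tournament: `wd P t i` is the probability
that player `i` wins the (sub)tournament with draw `t` and comparison matrix `P`. -/
noncomputable def wd {N : ℕ} (P : Fin N → Fin N → ℝ) :
    ∀ {n : ℕ}, BT (Fin N) n → Fin N → ℝ
  | _, .leaf j => fun i => if i = j then 1 else 0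
  | _, .node L R => fun i =>
      wd P L i * (∑ j, wd P R j * P i j) + wd P R i * (∑ j, wd P L j * P i j)

/-- `P` is a comparison matrix. -/
def IsCompMatrix {N : ℕ} (P : Fin N → Fin N → ℝ) : Prop :=
  ∀ i j : Fin N, i ≠ j → 0 ≤ P i j ∧ P i j ≤ 1 ∧ P i j + P j i = 1

/-- `P` is deterministic: every off-diagonal entry is 0 or 1. -/
def IsDet {N : ℕ} (P : Fin N → Fin N → ℝ) : Prop :=
  ∀ i j : Fin N, i ≠ j → P i j = 0 ∨ P i j = 1

/-- The set `𝒫(P,ε)` of ε-perturbations of `P`. -/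
def perturbs {N : ℕ} (P : Fin N → Fin N → ℝ) (ε : ℝ) : Set (Fin N → Fin N → ℝ) :=
  {P' | IsCompMatrix P' ∧ ∀ i j : Fin N, i ≠ j → |P' i j - P i j| ≤ ε}

/-- The ε-guaranteed winning probability `wp_ε(i,P,σ)`. -/
noncomputable def wpe {N n : ℕ} (i : Fin N) (P : Fin N → Fin N → ℝ) (ε : ℝ)
    (t : BT (Fin N) n) : ℝ :=
  sInf ((fun P' => wd P' t i) '' perturbs P ε)

/-- The comparison matrix of the hard `n`-round tournament `H_n` (players 0-indexed):
for `i < j`, player `i` beats player `j` iff `i = j - 2 ^ v` where `2 ^ v` is the largest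
power of 2 dividing `j` (in 0-indexed numbering). -/
noncomputable def hardP (n : ℕ) : Fin (2 ^ n) → Fin (2 ^ n) → ℝ := fun i j =>
  if i = j then 0
  else if (i : ℕ) < (j : ℕ) then
    (if (i : ℕ) + 2 ^ padicValNat 2 (j : ℕ) = (j : ℕ) then 1 else 0)
  else
    (if (j : ℕ) + 2 ^ padicValNat 2 (i : ℕ) = (i : ℕ) then 0 else 1)

/-- The tree of depth `n` whose leaves are `s, s+1, …, s + 2^n - 1` from left to right. -/
def ordTree : (n : ℕ) → ℕ → BT ℕ n
  | 0, s => .leaf s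
  | n + 1, s => .node (ordTree n s) (ordTree n (s + 2 ^ n))

/-- The identity draw, placing players `0, 1, …, 2^n - 1` on the leaves in order. -/
def idDraw (n : ℕ) : BT (Fin (2 ^ n)) n :=
  (ordTree n 0).map (fun k => ⟨k % 2 ^ n, Nat.mod_lt _ (by positivity)⟩)

/-- `f_p(x,y) = p(x+y) + (1-2p)xy`. -/
def fp (p x y : ℝ) : ℝ := p * (x + y) + (1 - 2 * p) * x * y

/-- `B_p` on trees with real leaf labels. -/
noncomputable def Bp (p : ℝ) : ∀ {n : ℕ}, BT ℝ n → ℝ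
  | _, .leaf x => x
  | _, .node L R => fp p (Bp p L) (Bp p R)

/-- Group a list into consecutive pairs. -/
def pairList {α : Type} : List α → List (α × α)
  | a :: b :: rest => (a, b) :: pairList rest
  | _ => []

/-- The first-round matches of a draw: the consecutive sibling pairs of leaves. -/
def firstPairs {α : Type} {n : ℕ} (t : BT α n) : List (α × α) := pairList t.leaves

/-- A draw is mixed (w.r.t. the set `B` of big players) if every first-round match
pairs a big player with a small player. -/
def MixedDraw {N n : ℕ} (B : Finset (Fin N)) (t : BT (Fin N) n) : Prop :=
  ∀ q ∈ firstPairs t, ((q.1 ∈ B) ↔ q.2 ∉ B)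

/-- Number of leaves labelled `1`. -/
noncomputable def ones {n : ℕ} (t : BT ℝ n) : ℕ := t.leaves.count 1

/-- All leaf labels are `0` or `1`. -/
def ZeroOne {n : ℕ} (t : BT ℝ n) : Prop := ∀ x ∈ t.leaves, x = 0 ∨ x = 1

/-- `P[kl←t]`: the matrix agreeing with `P` except `P k l = t` and `P l k = 1 - t`. -/
def updPair {N : ℕ} (P : Fin N → Fin N → ℝ) (k l : Fin N) (t : ℝ) :
    Fin N → Fin N → ℝ :=
  fun i j => if i = k ∧ j = l then t else if i = l ∧ j = k then 1 - t else P i j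

/-- Perturb a deterministic matrix: for each pair `(w, l) ∈ S` (winner first),
set `P w l = 1 - ε` and `P l w = ε`; other entries unchanged. -/
def detPerturb {N : ℕ} (P : Fin N → Fin N → ℝ) (S : Finset (Fin N × Fin N)) (ε : ℝ) :
    Fin N → Fin N → ℝ :=
  fun i j => if (i, j) ∈ S then 1 - ε else if (j, i) ∈ S then ε else P i j

/-- Swap the result of the single match between `a` and `b`. -/
def swapPair {N : ℕ} (P : Fin N → Fin N → ℝ) (a b : Fin N) : Fin N → Fin N → ℝ :=
  fun i j => if i = a ∧ j = b then P b a else if i = b ∧ j = a then P a b else P i j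

/-- The pair `(a,b)` (with `a` the winner) is crucial for `i` in `C(P,σ)`. -/
def Crucial {N n : ℕ} (P : Fin N → Fin N → ℝ) (σ : BT (Fin N) n) (i : Fin N)
    (a b : Fin N) : Prop :=
  a ≠ b ∧ P a b = 1 ∧ wd (swapPair P a b) σ i = 0
section Aux
open Finset

variable {N : ℕ}

lemma wd_leaf (P : Fin N → Fin N → ℝ) (a i : Fin N) :
    wd P (.leaf a) i = if i = a then 1 else 0 := rfl

lemma wd_node (P : Fin N → Fin N → ℝ) {n : ℕ} (L R : BT (Fin N) n) (i : Fin N) :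
    wd P (.node L R) i =
      wd P L i * (∑ j, wd P R j * P i j) + wd P R i * (∑ j, wd P L j * P i j) := rfl

lemma leaves_leaf {α : Type} (a : α) : (BT.leaf a).leaves = [a] := rfl

lemma leaves_node {α : Type} {n : ℕ} (L R : BT α n) :
    (BT.node L R).leaves = L.leaves ++ R.leaves := rfl

lemma wd_eq_zero (P : Fin N → Fin N → ℝ) :
    ∀ {n : ℕ} (t : BT (Fin N) n) (i : Fin N), i ∉ t.leaves → wd P t i = 0 := by
  intro n t
  induction t with
  | leaf a =>
    intro i hi
    simp [leaves_leaf] at hi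
    simp [wd_leaf, hi]
  | node L R ihL ihR =>
    intro i hi
    rw [leaves_node, List.mem_append] at hi
    push_neg at hi
    rw [wd_node, ihL i hi.1, ihR i hi.2]
    ring

lemma wd_congr {P Q : Fin N → Fin N → ℝ} :
    ∀ {n : ℕ} (t : BT (Fin N) n), t.leaves.Nodup →
      (∀ a ∈ t.leaves, ∀ b ∈ t.leaves, a ≠ b → P a b = Q a b) →
      ∀ i, wd P t i = wd Q t i := by
  intro n t
  induction t with
  | leaf a => intro _ _ i; rfl
  | node L R ihL ihR =>
    intro hnd hagree i
    rw [leaves_node] at hnd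
    obtain ⟨hndL, hndR, hdis⟩ := List.nodup_append'.mp hnd
    have hagL : ∀ a ∈ L.leaves, ∀ b ∈ L.leaves, a ≠ b → P a b = Q a b := fun a ha b hb hab =>
      hagree a (by rw [leaves_node]; exact List.mem_append_left _ ha)
        b (by rw [leaves_node]; exact List.mem_append_left _ hb) hab
    have hagR : ∀ a ∈ R.leaves, ∀ b ∈ R.leaves, a ≠ b → P a b = Q a b := fun a ha b hb hab =>
      hagree a (by rw [leaves_node]; exact List.mem_append_right _ ha)
        b (by rw [leaves_node]; exact List.mem_append_right _ hb) hab
    have hL := ihL hndL hagL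
    have hR := ihR hndR hagR
    rw [wd_node, wd_node, hL, hR]
    have t1 : wd Q L i * (∑ j, wd P R j * P i j) = wd Q L i * (∑ j, wd Q R j * Q i j) := by
      by_cases hi : i ∈ L.leaves
      · congr 1
        refine Finset.sum_congr rfl fun j _ => ?_
        by_cases hj : j ∈ R.leaves
        · rw [hR, hagree i (by rw [leaves_node]; exact List.mem_append_left _ hi)
            j (by rw [leaves_node]; exact List.mem_append_right _ hj)
            (fun h => hdis hi (h ▸ hj))]
        · rw [hR, wd_eq_zero Q R j hj, zero_mul, zero_mul]
      · rw [wd_eq_zero Q L i hi, zero_mul, zero_mul]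
    have t2 : wd Q R i * (∑ j, wd P L j * P i j) = wd Q R i * (∑ j, wd Q L j * Q i j) := by
      by_cases hi : i ∈ R.leaves
      · congr 1
        refine Finset.sum_congr rfl fun j _ => ?_
        by_cases hj : j ∈ L.leaves
        · rw [hL, hagree i (by rw [leaves_node]; exact List.mem_append_right _ hi)
            j (by rw [leaves_node]; exact List.mem_append_left _ hj)
            (fun h => hdis hj (h ▸ hi))]
        · rw [hL, wd_eq_zero Q L j hj, zero_mul, zero_mul]
      · rw [wd_eq_zero Q R i hi, zero_mul, zero_mul]
    rw [t1, t2]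

lemma wd_continuous :
    ∀ {n : ℕ} (t : BT (Fin N) n) (i : Fin N),
      Continuous fun Q : Fin N → Fin N → ℝ => wd Q t i := by
  intro n t
  have hev : ∀ (a b : Fin N), Continuous fun Q : Fin N → Fin N → ℝ => Q a b :=
    fun a b => (continuous_apply b).comp (continuous_apply a)
  induction t with
  | leaf a => intro i; simp only [wd_leaf]; exact continuous_const
  | node L R ihL ihR =>
    intro i
    simp only [wd_node]
    exact ((ihL i).mul (continuous_finset_sum _ fun j _ => (ihR j).mul (hev i j))).add
      ((ihR i).mul (continuous_finset_sum _ fun j _ => (ihL j).mul (hev i j)))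

end Aux
section Aux2
open Finset

variable {N : ℕ}

def AffineFun (f : ℝ → ℝ) : Prop := ∃ a b : ℝ, ∀ s, f s = a * s + b

lemma AffineFun.const (c : ℝ) : AffineFun fun _ => c := ⟨0, c, fun s => by ring⟩

lemma AffineFun.add {f g : ℝ → ℝ} (hf : AffineFun f) (hg : AffineFun g) :
    AffineFun fun s => f s + g s := by
  obtain ⟨a, b, hf⟩ := hf; obtain ⟨c, d, hg⟩ := hg
  exact ⟨a + c, b + d, fun s => by show f s + g s = _; rw [hf, hg]; ring⟩

lemma AffineFun.mul_const {f : ℝ → ℝ} (hf : AffineFun f) (c : ℝ) :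
    AffineFun fun s => f s * c := by
  obtain ⟨a, b, hf⟩ := hf
  exact ⟨a * c, b * c, fun s => by show f s * c = _; rw [hf]; ring⟩

lemma AffineFun.const_mul {f : ℝ → ℝ} (c : ℝ) (hf : AffineFun f) :
    AffineFun fun s => c * f s := by
  obtain ⟨a, b, hf⟩ := hf
  exact ⟨c * a, c * b, fun s => by show c * f s = _; rw [hf]; ring⟩

lemma AffineFun.congr {f g : ℝ → ℝ} (hf : AffineFun f) (h : ∀ s, g s = f s) :
    AffineFun g := by
  obtain ⟨a, b, hf⟩ := hf
  exact ⟨a, b, fun s => by rw [h, hf]⟩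

lemma AffineFun.sum {ι : Type*} (s : Finset ι) (f : ι → ℝ → ℝ)
    (h : ∀ j ∈ s, AffineFun (f j)) : AffineFun fun t => ∑ j ∈ s, f j t := by
  classical
  induction s using Finset.induction_on with
  | empty => exact (AffineFun.const 0).congr fun s => by simp
  | @insert a s ha ih =>
    exact (((h a (Finset.mem_insert_self a s)).add
      (ih fun j hj => h j (Finset.mem_insert_of_mem hj))).congr
      fun t => by rw [Finset.sum_insert ha])

lemma updPair_apply (Q : Fin N → Fin N → ℝ) (k l : Fin N) (t : ℝ) (i j : Fin N) :
    updPair Q k l t i j =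
      if i = k ∧ j = l then t else if i = l ∧ j = k then 1 - t else Q i j := rfl

lemma updPair_of_ne (Q : Fin N → Fin N → ℝ) (k l : Fin N) (t : ℝ) (i j : Fin N)
    (h1 : ¬(i = k ∧ j = l)) (h2 : ¬(i = l ∧ j = k)) : updPair Q k l t i j = Q i j := by
  rw [updPair_apply, if_neg h1, if_neg h2]

lemma affine_updPair (Q : Fin N → Fin N → ℝ) (k l i j : Fin N) :
    AffineFun fun t => updPair Q k l t i j := by
  by_cases h1 : i = k ∧ j = l
  · exact ⟨1, 0, fun s => by show updPair Q k l s i j = _; rw [updPair_apply, if_pos h1]; ring⟩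
  · by_cases h2 : i = l ∧ j = k
    · exact ⟨-1, 1, fun s => by show updPair Q k l s i j = _; rw [updPair_apply, if_neg h1, if_pos h2]; ring⟩
    · exact ⟨0, Q i j, fun s => by show updPair Q k l s i j = _; rw [updPair_of_ne _ _ _ _ _ _ h1 h2]; ring⟩

lemma wd_affine (Q : Fin N → Fin N → ℝ) (k l : Fin N) :
    ∀ {n : ℕ} (t : BT (Fin N) n), t.leaves.Nodup → ∀ i : Fin N,
      AffineFun fun s => wd (updPair Q k l s) t i := by
  intro n t
  induction t with
  | leaf a => intro _ i; exact AffineFun.const (if i = a then 1 else 0)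
  | node L R ihL ihR =>
    intro hnd i
    rw [leaves_node] at hnd
    obtain ⟨hndL, hndR, hdis⟩ := List.nodup_append'.mp hnd
    by_cases hbL : k ∈ L.leaves ∧ l ∈ L.leaves
    · -- both in L
      have hkR : k ∉ R.leaves := fun h => hdis hbL.1 h
      have hlR : l ∉ R.leaves := fun h => hdis hbL.2 h
      have hR : ∀ (s : ℝ) (j : Fin N), wd (updPair Q k l s) R j = wd Q R j := fun s j =>
        wd_congr R hndR (fun a ha b hb _ =>
          updPair_of_ne _ _ _ _ _ _ (fun h => hkR (by rw [← h.1]; exact ha)) (fun h => hlR (by rw [← h.1]; exact ha))) j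
      have hsum : ∀ s : ℝ,
          (∑ j, wd (updPair Q k l s) R j * updPair Q k l s i j) = ∑ j, wd Q R j * Q i j := by
        intro s
        refine Finset.sum_congr rfl fun j _ => ?_
        rw [hR]
        by_cases hj : j ∈ R.leaves
        · rw [updPair_of_ne _ _ _ _ _ _ (fun h => hlR (by rw [← h.2]; exact hj)) (fun h => hkR (by rw [← h.2]; exact hj))]
        · rw [wd_eq_zero Q R j hj, zero_mul, zero_mul]
      by_cases hiR : i ∈ R.leaves
      · have hik : ¬ i = k := fun h => hkR (by rw [← h]; exact hiR)
        have hil : ¬ i = l := fun h => hlR (by rw [← h]; exact hiR)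
        refine (((ihL hndL i).mul_const (∑ j, wd Q R j * Q i j)).add
          ((AffineFun.sum Finset.univ (fun j => fun s => wd (updPair Q k l s) L j * Q i j)
            (fun j _ => (ihL hndL j).mul_const (Q i j))).const_mul (wd Q R i))).congr
          fun s => ?_
        rw [wd_node, hsum, hR]
        congr 1
        congr 1
        refine Finset.sum_congr rfl fun j _ => ?_
        rw [updPair_of_ne _ _ _ _ _ _ (fun h => hik h.1) (fun h => hil h.1)]
      · refine ((ihL hndL i).mul_const (∑ j, wd Q R j * Q i j)).congr fun s => ?_
        rw [wd_node, hsum, hR, wd_eq_zero Q R i hiR, zero_mul, add_zero]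
    · by_cases hbR : k ∈ R.leaves ∧ l ∈ R.leaves
      · -- both in R
        have hkL : k ∉ L.leaves := fun h => hdis h hbR.1
        have hlL : l ∉ L.leaves := fun h => hdis h hbR.2
        have hL : ∀ (s : ℝ) (j : Fin N), wd (updPair Q k l s) L j = wd Q L j := fun s j =>
          wd_congr L hndL (fun a ha b hb _ =>
            updPair_of_ne _ _ _ _ _ _ (fun h => hkL (by rw [← h.1]; exact ha)) (fun h => hlL (by rw [← h.1]; exact ha))) j
        have hsum : ∀ s : ℝ,
            (∑ j, wd (updPair Q k l s) L j * updPair Q k l s i j) = ∑ j, wd Q L j * Q i j := by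
          intro s
          refine Finset.sum_congr rfl fun j _ => ?_
          rw [hL]
          by_cases hj : j ∈ L.leaves
          · rw [updPair_of_ne _ _ _ _ _ _ (fun h => hlL (by rw [← h.2]; exact hj)) (fun h => hkL (by rw [← h.2]; exact hj))]
          · rw [wd_eq_zero Q L j hj, zero_mul, zero_mul]
        by_cases hiL : i ∈ L.leaves
        · have hik : ¬ i = k := fun h => hkL (by rw [← h]; exact hiL)
          have hil : ¬ i = l := fun h => hlL (by rw [← h]; exact hiL)
          refine (((AffineFun.sum Finset.univ (fun j => fun s => wd (updPair Q k l s) R j * Q i j)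
              (fun j _ => (ihR hndR j).mul_const (Q i j))).const_mul (wd Q L i)).add
            ((ihR hndR i).mul_const (∑ j, wd Q L j * Q i j))).congr fun s => ?_
          rw [wd_node, hsum, hL]
          congr 1
          congr 1
          refine Finset.sum_congr rfl fun j _ => ?_
          rw [updPair_of_ne _ _ _ _ _ _ (fun h => hik h.1) (fun h => hil h.1)]
        · refine ((ihR hndR i).mul_const (∑ j, wd Q L j * Q i j)).congr fun s => ?_
          rw [wd_node, hsum, hL, wd_eq_zero Q L i hiL, zero_mul, zero_add]
      · -- no changed pair inside L or inside R
        have hL : ∀ (s : ℝ) (j : Fin N), wd (updPair Q k l s) L j = wd Q L j := fun s j =>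
          wd_congr L hndL (fun a ha b hb _ =>
            updPair_of_ne _ _ _ _ _ _ (fun h => hbL ⟨by rw [← h.1]; exact ha, by rw [← h.2]; exact hb⟩)
              (fun h => hbL ⟨by rw [← h.2]; exact hb, by rw [← h.1]; exact ha⟩)) j
        have hR : ∀ (s : ℝ) (j : Fin N), wd (updPair Q k l s) R j = wd Q R j := fun s j =>
          wd_congr R hndR (fun a ha b hb _ =>
            updPair_of_ne _ _ _ _ _ _ (fun h => hbR ⟨by rw [← h.1]; exact ha, by rw [← h.2]; exact hb⟩)
              (fun h => hbR ⟨by rw [← h.2]; exact hb, by rw [← h.1]; exact ha⟩)) j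
        refine (((AffineFun.sum Finset.univ (fun j => fun s => wd Q R j * updPair Q k l s i j)
            (fun j _ => (affine_updPair Q k l i j).const_mul (wd Q R j))).const_mul
            (wd Q L i)).add
          ((AffineFun.sum Finset.univ (fun j => fun s => wd Q L j * updPair Q k l s i j)
            (fun j _ => (affine_updPair Q k l i j).const_mul (wd Q L j))).const_mul
            (wd Q R i))).congr fun s => ?_
        rw [wd_node]
        simp only [hL, hR]

end Aux2

/-- the infimum defining `wp_ε` is attained by a perturbation each of
whose entries either differs from the original by exactly `ε` or lies in `{0,1}`. -/
theorem wpe_attained_on_boundary (n : ℕ)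
    (P : Fin (2 ^ n) → Fin (2 ^ n) → ℝ) (hP : IsCompMatrix P)
    (σ : BT (Fin (2 ^ n)) n) (hσ : IsDraw σ)
    (istar : Fin (2 ^ n)) (ε : ℝ) (hε : 0 < ε) :
    ∃ P' ∈ perturbs P ε, wd P' σ istar = wpe istar P ε σ ∧
      ∀ i j : Fin (2 ^ n), i ≠ j →
        |P' i j - P i j| = ε ∨ P' i j = 0 ∨ P' i j = 1 := by
  classical
  have hnd : σ.leaves.Nodup := List.nodup_iff_count_le_one.mpr fun a => (hσ a).le
  have hev : ∀ (a b : Fin (2 ^ n)), Continuous fun Q : Fin (2 ^ n) → Fin (2 ^ n) → ℝ => Q a b :=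
    fun a b => (continuous_apply b).comp (continuous_apply a)
  set K : Set (Fin (2 ^ n) → Fin (2 ^ n) → ℝ) :=
    {Q | ∀ i j : Fin (2 ^ n), if i = j then Q i j = P i j else
      (0 ≤ Q i j ∧ Q i j ≤ 1 ∧ Q i j + Q j i = 1 ∧ |Q i j - P i j| ≤ ε)} with hKdef
  have hKsub : K ⊆ perturbs P ε := by
    intro Q hQ
    refine ⟨fun i j hij => ?_, fun i j hij => ?_⟩
    · have h := hQ i j
      rw [if_neg hij] at h
      exact ⟨h.1, h.2.1, h.2.2.1⟩
    · have h := hQ i j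
      rw [if_neg hij] at h
      exact h.2.2.2
  have hPK : P ∈ K := by
    intro i j
    by_cases hij : i = j
    · rw [if_pos hij]
    · rw [if_neg hij]
      obtain ⟨h1, h2, h3⟩ := hP i j hij
      exact ⟨h1, h2, h3, by rw [sub_self, abs_zero]; exact hε.le⟩
  have hKclosed : IsClosed K := by
    have hKi : K = ⋂ i, ⋂ j, {Q : Fin (2 ^ n) → Fin (2 ^ n) → ℝ |
        if i = j then Q i j = P i j else
        (0 ≤ Q i j ∧ Q i j ≤ 1 ∧ Q i j + Q j i = 1 ∧ |Q i j - P i j| ≤ ε)} := by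
      ext Q
      simp only [hKdef, Set.mem_setOf_eq, Set.mem_iInter]
    rw [hKi]
    refine isClosed_iInter fun i => isClosed_iInter fun j => ?_
    by_cases hij : i = j
    · simp only [if_pos hij]
      exact isClosed_eq (hev i j) continuous_const
    · simp only [if_neg hij, Set.setOf_and]
      exact ((isClosed_le continuous_const (hev i j)).inter
        ((isClosed_le (hev i j) continuous_const).inter
        ((isClosed_eq ((hev i j).add (hev j i)) continuous_const).inter
        (isClosed_le (((hev i j).sub continuous_const).abs) continuous_const))))
  have hKbdd : K ⊆ Set.pi Set.univ (fun i => Set.pi Set.univ fun j =>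
      Set.Icc (P i j - 1) (P i j + 1)) := by
    intro Q hQ
    rw [Set.mem_univ_pi]
    intro i
    rw [Set.mem_univ_pi]
    intro j
    have h := hQ i j
    by_cases hij : i = j
    · rw [if_pos hij] at h
      rw [h]
      constructor <;> linarith
    · rw [if_neg hij] at h
      obtain ⟨hP1, hP2, _⟩ := hP i j hij
      exact ⟨by linarith [h.1], by linarith [h.2.1]⟩
  have hKcompact : IsCompact K :=
    IsCompact.of_isClosed_subset
      (isCompact_univ_pi fun i => isCompact_univ_pi fun j => isCompact_Icc) hKclosed hKbdd
  obtain ⟨Q₀, hQ₀K, hQ₀min⟩ :=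
    hKcompact.exists_isMinOn ⟨P, hPK⟩ ((wd_continuous σ istar).continuousOn)
  set m := wd Q₀ σ istar with hm
  have hlb : ∀ Q ∈ perturbs P ε, m ≤ wd Q σ istar := by
    intro Q hQ
    obtain ⟨hQc, hQp⟩ := hQ
    set Q' : Fin (2 ^ n) → Fin (2 ^ n) → ℝ := fun i j => if i = j then P i j else Q i j with hQ'def
    have hQ'K : Q' ∈ K := by
      intro i j
      by_cases hij : i = j
      · rw [if_pos hij]
        simp only [hQ'def, if_pos hij]
      · rw [if_neg hij]
        have e1 : Q' i j = Q i j := by simp only [hQ'def, if_neg hij]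
        have e2 : Q' j i = Q j i := by simp only [hQ'def, if_neg (Ne.symm hij)]
        rw [e1, e2]
        exact ⟨(hQc i j hij).1, (hQc i j hij).2.1, (hQc i j hij).2.2, hQp i j hij⟩
    have heq : wd Q' σ istar = wd Q σ istar :=
      wd_congr σ hnd (fun a _ b _ hab => by simp only [hQ'def, if_neg hab]) istar
    calc m ≤ wd Q' σ istar := isMinOn_iff.mp hQ₀min Q' hQ'K
    _ = wd Q σ istar := heq
  have hwpe : wpe istar P ε σ = m := by
    have : wpe istar P ε σ = sInf ((fun P' => wd P' σ istar) '' perturbs P ε) := rfl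
    rw [this]
    apply IsLeast.csInf_eq
    constructor
    · exact ⟨Q₀, hKsub hQ₀K, rfl⟩
    · rintro x ⟨Q, hQ, rfl⟩
      exact hlb Q hQ
  have claim : ∀ (S : Finset (Fin (2 ^ n) × Fin (2 ^ n))) (Q : Fin (2 ^ n) → Fin (2 ^ n) → ℝ),
      Q ∈ perturbs P ε → wd Q σ istar = m →
      (∀ i j : Fin (2 ^ n), i ≠ j → (i, j) ∉ S → (j, i) ∉ S →
        (|Q i j - P i j| = ε ∨ Q i j = 0 ∨ Q i j = 1)) →
      ∃ P', P' ∈ perturbs P ε ∧ wd P' σ istar = m ∧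
        ∀ i j : Fin (2 ^ n), i ≠ j → (|P' i j - P i j| = ε ∨ P' i j = 0 ∨ P' i j = 1) := by
    intro S
    induction S using Finset.induction_on with
    | empty =>
      intro Q hQ hQm hBd
      exact ⟨Q, hQ, hQm, fun i j hij =>
        hBd i j hij (Finset.notMem_empty _) (Finset.notMem_empty _)⟩
    | @insert p S hpS ih =>
      obtain ⟨k, l⟩ := p
      intro Q hQ hQm hBd
      by_cases hkl : k = l
      · refine ih Q hQ hQm fun i j hij hiS hjS => hBd i j hij ?_ ?_
        · intro hmem'
          rcases Finset.mem_insert.mp hmem' with h | h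
          · rw [Prod.mk.injEq] at h
            exact hij (h.1.trans (hkl ▸ h.2.symm))
          · exact hiS h
        · intro hmem'
          rcases Finset.mem_insert.mp hmem' with h | h
          · rw [Prod.mk.injEq] at h
            exact hij (h.2.trans (hkl ▸ h.1.symm))
          · exact hjS h
      · obtain ⟨hQc, hQp⟩ := hQ
        have hPkl := hP k l hkl
        have hQkl := hQc k l hkl
        have hQbound := abs_le.mp (hQp k l hkl)
        set lo := max 0 (P k l - ε) with hlo_def
        set hi := min 1 (P k l + ε) with hhi_def
        have hloQ : lo ≤ Q k l := max_le hQkl.1 (by linarith [hQbound.1])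
        have hQhi : Q k l ≤ hi := le_min hQkl.2.1 (by linarith [hQbound.2])
        have hlohi : lo ≤ hi := le_trans hloQ hQhi
        have hlo0 : (0 : ℝ) ≤ lo := le_max_left _ _
        have hhi1 : hi ≤ 1 := min_le_left _ _
        have hloe : P k l - ε ≤ lo := le_max_right _ _
        have hhie : hi ≤ P k l + ε := min_le_right _ _
        have hmem : ∀ t : ℝ, lo ≤ t → t ≤ hi → updPair Q k l t ∈ perturbs P ε := by
          intro t ht1 ht2
          have ht0 : 0 ≤ t := le_trans hlo0 ht1
          have ht1' : t ≤ 1 := le_trans ht2 hhi1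
          have htab : |t - P k l| ≤ ε := abs_le.mpr ⟨by linarith, by linarith⟩
          refine ⟨fun i j hij => ?_, fun i j hij => ?_⟩
          · by_cases h1 : i = k ∧ j = l
            · have e1 : updPair Q k l t i j = t := by rw [updPair_apply, if_pos h1]
              have e2 : updPair Q k l t j i = 1 - t := by
                rw [updPair_apply, if_neg (fun h => hkl (h1.1.symm.trans h.2)),
                  if_pos ⟨h1.2, h1.1⟩]
              rw [e1, e2]
              exact ⟨ht0, ht1', by ring⟩
            · by_cases h2 : i = l ∧ j = k
              · have e1 : updPair Q k l t i j = 1 - t := by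
                  rw [updPair_apply, if_neg h1, if_pos h2]
                have e2 : updPair Q k l t j i = t := by
                  rw [updPair_apply, if_pos ⟨h2.2, h2.1⟩]
                rw [e1, e2]
                exact ⟨by linarith, by linarith, by ring⟩
              · have e1 : updPair Q k l t i j = Q i j := updPair_of_ne _ _ _ _ _ _ h1 h2
                have e2 : updPair Q k l t j i = Q j i :=
                  updPair_of_ne _ _ _ _ _ _ (fun h => h2 ⟨h.2, h.1⟩) (fun h => h1 ⟨h.2, h.1⟩)
                rw [e1, e2]
                exact hQc i j hij
          · by_cases h1 : i = k ∧ j = l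
            · rw [updPair_apply, if_pos h1, h1.1, h1.2]
              exact htab
            · by_cases h2 : i = l ∧ j = k
              · rw [updPair_apply, if_neg h1, if_pos h2, h2.1, h2.2]
                have hPlk : P l k = 1 - P k l := by linarith [hPkl.2.2]
                rw [hPlk]
                have e : 1 - t - (1 - P k l) = -(t - P k l) := by ring
                rw [e, abs_neg]
                exact htab
              · rw [updPair_of_ne _ _ _ _ _ _ h1 h2]
                exact hQp i j hij
        obtain ⟨a, b, hab0⟩ := wd_affine Q k l σ hnd istar
        have hab : ∀ s : ℝ, wd (updPair Q k l s) σ istar = a * s + b := fun s => hab0 s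
        have hfix : updPair Q k l (Q k l) = Q := by
          funext i j
          by_cases h1 : i = k ∧ j = l
          · rw [updPair_apply, if_pos h1, h1.1, h1.2]
          · by_cases h2 : i = l ∧ j = k
            · rw [updPair_apply, if_neg h1, if_pos h2, h2.1, h2.2]
              linarith [hQc k l hkl]
            · exact updPair_of_ne _ _ _ _ _ _ h1 h2
        have hgQ : a * Q k l + b = m := by
          rw [← hab, hfix]
          exact hQm
        have hglow : ∀ t, lo ≤ t → t ≤ hi → m ≤ a * t + b := by
          intro t h1 h2
          rw [← hab]
          exact hlb _ (hmem t h1 h2)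
        set tstar := if 0 ≤ a then lo else hi with htstar
        have htbnd : lo ≤ tstar ∧ tstar ≤ hi := by
          rw [htstar]
          split
          · exact ⟨le_refl _, hlohi⟩
          · exact ⟨hlohi, le_refl _⟩
        have hgt : a * tstar + b = m := by
          refine le_antisymm ?_ (hglow tstar htbnd.1 htbnd.2)
          rw [htstar]
          split
          · next h => nlinarith [hgQ, hloQ]
          · next h =>
            push_neg at h
            nlinarith [hgQ, hQhi]
        have hQ₁mem : updPair Q k l tstar ∈ perturbs P ε := hmem tstar htbnd.1 htbnd.2
        have hQ₁m : wd (updPair Q k l tstar) σ istar = m := (hab tstar).trans hgt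
        have hQ₁kl : updPair Q k l tstar k l = tstar := by
          rw [updPair_apply, if_pos ⟨rfl, rfl⟩]
        have hQ₁lk : updPair Q k l tstar l k = 1 - tstar := by
          rw [updPair_apply, if_neg (fun h => hkl h.1.symm), if_pos ⟨rfl, rfl⟩]
        have hBdkl : |tstar - P k l| = ε ∨ tstar = 0 ∨ tstar = 1 := by
          rw [htstar]
          split
          · rcases max_choice 0 (P k l - ε) with h | h
            · right; left; rw [hlo_def, h]
            · left
              rw [hlo_def, h]
              have e : P k l - ε - P k l = -ε := by ring
              rw [e, abs_neg, abs_of_pos hε]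
          · rcases min_choice 1 (P k l + ε) with h | h
            · right; right; rw [hhi_def, h]
            · left
              rw [hhi_def, h]
              have e : P k l + ε - P k l = ε := by ring
              rw [e, abs_of_pos hε]
        refine ih (updPair Q k l tstar) hQ₁mem hQ₁m ?_
        intro i j hij hiS hjS
        by_cases h1 : i = k ∧ j = l
        · rw [h1.1, h1.2, hQ₁kl]
          exact hBdkl
        · by_cases h2 : i = l ∧ j = k
          · rw [h2.1, h2.2, hQ₁lk]
            have hPlk : P l k = 1 - P k l := by linarith [hPkl.2.2]
            rcases hBdkl with h | h | h
            · left
              rw [hPlk]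
              have e : 1 - tstar - (1 - P k l) = -(tstar - P k l) := by ring
              rw [e, abs_neg]
              exact h
            · right; right; rw [h]; ring
            · right; left; rw [h]; ring
          · rw [updPair_of_ne _ _ _ _ _ _ h1 h2]
            refine hBd i j hij ?_ ?_
            · intro hmem'
              rcases Finset.mem_insert.mp hmem' with h | h
              · rw [Prod.mk.injEq] at h
                exact h1 ⟨h.1, h.2⟩
              · exact hiS h
            · intro hmem'
              rcases Finset.mem_insert.mp hmem' with h | h
              · rw [Prod.mk.injEq] at h
                exact h2 ⟨h.2, h.1⟩
              · exact hjS h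
  obtain ⟨P', hP'1, hP'2, hP'3⟩ := claim Finset.univ Q₀ (hKsub hQ₀K) rfl
    (fun i j _ hiU _ => absurd (Finset.mem_univ _) hiU)
  exact ⟨P', hP'1, hP'2.trans hwpe.symm, hP'3⟩
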